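/- arXiv:1506.07623 — 2 statements merged into one kernel-verified Lean document; each statement's English description precedes it below -/
import Mathlib

section
/- Let ρ be a Borel probability measure on ℝ having a finite first moment and negative drift ∫ y dρ(y) < 0. Then for the random walk on ℝ₊ driven by ρ and the stopping time τ = inf{n ≥ 1 : X_{n−1} + Y_n ≤ 0}, one has 𝔼_x τ < ∞ for every x ∈ ℝ₊ (in particular τ is ℙ_x-a.s. finite), and the formula μ(f) = (1/𝔼₀τ)·𝔼₀[Σ_{k=0}^{τ−1} f(X_k)], for bounded borelian f, defines a P-invariant probability measure μ on ℝ₊. -/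
open MeasureTheory Filter Set Topology
open scoped ENNReal NNReal ENat

noncomputable section

/-- The random walk on `ℝ₊` driven by the increments `(Y_n)_{n ≥ 1}` and started at `x`:
`X_0 = x`, `X_{n+1} = max (X_n + Y_{n+1}, 0)`. -/
def walk {Ω : Type*} (Y : ℕ → Ω → ℝ) (x : ℝ) : ℕ → Ω → ℝ
  | 0 => fun _ => x
  | n + 1 => fun ω => max (walk Y x n ω + Y (n + 1) ω) 0

/-- The stopping time `τ = inf {n ≥ 1 | X_{n-1} + Y_n ≤ 0}`, with value `∞` if the walk
never attempts to cross `0`. -/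
def hitTime {Ω : Type*} (Y : ℕ → Ω → ℝ) (x : ℝ) (ω : Ω) : ℕ∞ :=
  sInf ((fun n : ℕ => (n : ℕ∞)) '' {n : ℕ | 1 ≤ n ∧ walk Y x (n - 1) ω + Y n ω ≤ 0})

/-- `(Y_n)` is an iid sequence of law `ρ` on the probability space `(Ω, P)`. -/
def IsIIDSeq {Ω : Type*} [MeasurableSpace Ω] (P : Measure Ω) (Y : ℕ → Ω → ℝ)
    (ρ : Measure ℝ) : Prop :=
  (∀ n, Measurable (Y n)) ∧ (∀ n, Measure.map (Y n) P = ρ) ∧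
    ProbabilityTheory.iIndepFun Y P

/-- The Markov operator of the walk: `Pf(x) = ∫ f(max(x+y,0)) dρ(y)`. -/
def Pw (ρ : Measure ℝ) (f : ℝ → ℝ) (x : ℝ) : ℝ := ∫ y, f (max (x + y) 0) ∂ρ

/-- The Markov operator of the walk, acting on nonnegative functions. -/
def PwE (ρ : Measure ℝ) (f : ℝ → ℝ≥0∞) (x : ℝ) : ℝ≥0∞ := ∫⁻ y, f (max (x + y) 0) ∂ρ

/-- The functions `u_s(x) = 1 + |x|^s`. -/
def us (s : ℝ) (x : ℝ) : ℝ := 1 + |x| ^ s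

/-- `𝔼_x τ`, with values in `[0,∞]`. -/
def EtauW {Ω : Type*} [MeasurableSpace Ω] (P : Measure Ω) (Y : ℕ → Ω → ℝ) (x : ℝ) :
    ℝ≥0∞ :=
  ∫⁻ ω, (hitTime Y x ω : ℝ≥0∞) ∂P

/-- The induced operator of the walk: `Qg(x) = ∫_{τ<∞} g(X_τ) dℙ_x`. -/
def Qw {Ω : Type*} [MeasurableSpace Ω] (P : Measure Ω) (Y : ℕ → Ω → ℝ) (g : ℝ → ℝ)
    (x : ℝ) : ℝ :=
  ∫ ω in {ω | hitTime Y x ω ≠ ⊤}, g (walk Y x (hitTime Y x ω).toNat ω) ∂P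

/-- `μ` is the measure defined by `μ(A) = 𝔼₀[∑_{k<τ} 𝟙_A(X_k)] / 𝔼₀ τ`. -/
def IsStatMeasure {Ω : Type*} [MeasurableSpace Ω] (P : Measure Ω) (Y : ℕ → Ω → ℝ)
    (μ : Measure ℝ) : Prop :=
  ∀ A : Set ℝ, MeasurableSet A →
    μ A = (∫⁻ ω, ∑ k ∈ Finset.range (hitTime Y 0 ω).toNat,
        A.indicator (fun _ => (1 : ℝ≥0∞)) (walk Y 0 k ω) ∂P) / EtauW P Y 0

/-- The constant `B_u = sup_{x ≥ 0} (Pu - u) + 1` for the walk. -/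
def BuW (ρ : Measure ℝ) (u : ℝ → ℝ) : ℝ :=
  sSup ((fun x => Pw ρ u x - u x) '' Set.Ici 0) + 1

/-- The weight `u - Pu + B_u` defining the space `𝓔¹_u` for the walk. -/
def wEW (ρ : Measure ℝ) (u : ℝ → ℝ) : ℝ → ℝ := fun x => u x - Pw ρ u x + BuW ρ u

/-- Membership in the weighted space `𝓕¹_v` of functions on `ℝ₊`. -/
def MemWOn (v f : ℝ → ℝ) : Prop :=
  Measurable f ∧ ∃ C : ℝ, ∀ x ∈ Set.Ici (0 : ℝ), |f x| ≤ C * v x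

/-- The norm of the weighted space `𝓕¹_v` of functions on `ℝ₊`. -/
def normWOn (v f : ℝ → ℝ) : ℝ := ⨆ x : Set.Ici (0 : ℝ), |f x.1| / v x.1

namespace SP

variable {Ω : Type*}

def hcond (Z : ℕ → Ω → ℝ) (x : ℝ) (ω : Ω) (n : ℕ) : Prop :=
  1 ≤ n ∧ walk Z x (n - 1) ω + Z n ω ≤ 0

lemma hitTime_def (Z : ℕ → Ω → ℝ) (x : ℝ) (ω : Ω) :
    hitTime Z x ω = sInf ((fun n : ℕ => (n : ℕ∞)) '' {n | hcond Z x ω n}) := rfl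

lemma hit_le {Z : ℕ → Ω → ℝ} {x : ℝ} {ω : Ω} {n : ℕ} (h : hcond Z x ω n) :
    hitTime Z x ω ≤ n := sInf_le ⟨n, h, rfl⟩

lemma hitTime_eq_coe_sInf {Z : ℕ → Ω → ℝ} {x : ℝ} {ω : Ω}
    (h : {n | hcond Z x ω n}.Nonempty) :
    hitTime Z x ω = (sInf {n | hcond Z x ω n} : ℕ) := by
  refine le_antisymm (hit_le (Nat.sInf_mem h)) (le_sInf ?_)
  rintro _ ⟨n, hn, rfl⟩
  exact Nat.cast_le.mpr (Nat.sInf_le hn)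

lemma hitTime_eq_top {Z : ℕ → Ω → ℝ} {x : ℝ} {ω : Ω}
    (h : ¬ {n | hcond Z x ω n}.Nonempty) : hitTime Z x ω = ⊤ := by
  rw [hitTime_def, Set.not_nonempty_iff_eq_empty.mp h]
  simp

lemma lt_hitTime_iff {Z : ℕ → Ω → ℝ} {x : ℝ} {ω : Ω} {k : ℕ} :
    (k : ℕ∞) < hitTime Z x ω ↔ ∀ j, hcond Z x ω j → k < j := by
  constructor
  · intro h j hj
    by_contra hk
    have h1 : hitTime Z x ω ≤ (k : ℕ∞) :=
      (hit_le hj).trans (by exact_mod_cast not_lt.mp hk)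
    exact absurd (lt_of_lt_of_le h h1) (lt_irrefl _)
  · intro h
    by_cases hne : {n | hcond Z x ω n}.Nonempty
    · rw [hitTime_eq_coe_sInf hne]
      exact_mod_cast h _ (Nat.sInf_mem hne)
    · rw [hitTime_eq_top hne]
      exact Ne.lt_top (ENat.coe_ne_top k)

lemma lt_hitTime_iff' {Z : ℕ → Ω → ℝ} {x : ℝ} {ω : Ω} {k : ℕ} :
    (k : ℕ∞) < hitTime Z x ω ↔
      ∀ j, 1 ≤ j → j ≤ k → ¬ (walk Z x (j - 1) ω + Z j ω ≤ 0) := by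
  rw [lt_hitTime_iff]
  constructor
  · intro h j h1 hk hle
    exact absurd (h j ⟨h1, hle⟩) (not_lt.mpr hk)
  · rintro h j ⟨h1, hle⟩
    by_contra hk
    exact h j h1 (not_lt.mp hk) hle

lemma zero_lt_hitTime {Z : ℕ → Ω → ℝ} {x : ℝ} {ω : Ω} :
    ((0 : ℕ) : ℕ∞) < hitTime Z x ω := by
  rw [lt_hitTime_iff']
  intro j h1 h0
  omega

lemma walk_nonneg {Z : ℕ → Ω → ℝ} {x : ℝ} (hx : 0 ≤ x) (n : ℕ) (ω : Ω) :
    0 ≤ walk Z x n ω := by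
  cases n with
  | zero => exact hx
  | succ m => exact le_max_right _ _

lemma walk_eq_sum {Z : ℕ → Ω → ℝ} {x : ℝ} {ω : Ω} :
    ∀ {m : ℕ}, (∀ j, 1 ≤ j → j ≤ m → ¬ (walk Z x (j - 1) ω + Z j ω ≤ 0)) →
      walk Z x m ω = x + ∑ i ∈ Finset.range m, Z (i + 1) ω := by
  intro m
  induction m with
  | zero => intro _; simp [walk]
  | succ m ih =>
    intro hm
    have hmax : ¬ (walk Z x m ω + Z (m + 1) ω ≤ 0) := by
      have := hm (m + 1) (by omega) le_rfl
      simpa using this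
    have hw : walk Z x (m + 1) ω = max (walk Z x m ω + Z (m + 1) ω) 0 := rfl
    rw [hw, max_eq_left (le_of_lt (not_le.mp hmax)),
      ih (fun j h1 h2 => hm j h1 (by omega)), Finset.sum_range_succ]
    ring

lemma walk_mono {Z Z' : ℕ → Ω → ℝ} (h : ∀ n ω, Z n ω ≤ Z' n ω) (x : ℝ) (ω : Ω) :
    ∀ n, walk Z x n ω ≤ walk Z' x n ω := by
  intro n
  induction n with
  | zero => exact le_rfl
  | succ m ih =>
    exact max_le_max (add_le_add ih (h (m + 1) ω)) le_rfl

lemma hitTime_mono {Z Z' : ℕ → Ω → ℝ} (h : ∀ n ω, Z n ω ≤ Z' n ω) (x : ℝ) (ω : Ω) :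
    hitTime Z x ω ≤ hitTime Z' x ω := by
  rw [hitTime_def, hitTime_def]
  apply sInf_le_sInf
  apply Set.image_mono
  intro n hn
  exact ⟨hn.1, le_trans (add_le_add (walk_mono h x ω (n - 1)) (h n ω)) hn.2⟩

section Meas

variable [MeasurableSpace Ω]

lemma measurable_walk {Z : ℕ → Ω → ℝ} (hZ : ∀ n, Measurable (Z n)) (x : ℝ) :
    ∀ n, Measurable (walk Z x n)
  | 0 => measurable_const
  | (n + 1) => ((measurable_walk hZ x n).add (hZ (n + 1))).max measurable_const

lemma measurableSet_lt_hitTime {Z : ℕ → Ω → ℝ} (hZ : ∀ n, Measurable (Z n))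
    (x : ℝ) (k : ℕ) : MeasurableSet {ω | (k : ℕ∞) < hitTime Z x ω} := by
  have : {ω | (k : ℕ∞) < hitTime Z x ω} =
      ⋂ j ∈ Finset.Icc 1 k, {ω | walk Z x (j - 1) ω + Z j ω ≤ 0}ᶜ := by
    ext ω
    simp only [Set.mem_setOf_eq, lt_hitTime_iff', Set.mem_iInter, Finset.mem_Icc,
      Set.mem_compl_iff, and_imp]
  rw [this]
  exact MeasurableSet.biInter (Set.to_countable _) fun j _ =>
    (measurableSet_le ((measurable_walk hZ x (j - 1)).add (hZ j)) measurable_const).compl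

lemma measurableSet_hitTime_top {Z : ℕ → Ω → ℝ} (hZ : ∀ n, Measurable (Z n))
    (x : ℝ) : MeasurableSet {ω | hitTime Z x ω = ⊤} := by
  have : {ω | hitTime Z x ω = ⊤} =
      ⋂ j : ℕ, ({ω | 1 ≤ j} ∩ {ω | walk Z x (j - 1) ω + Z j ω ≤ 0})ᶜ := by
    ext ω
    simp only [Set.mem_setOf_eq, Set.mem_iInter, Set.mem_compl_iff, Set.mem_inter_iff]
    constructor
    · intro h j hj
      have h1 : hitTime Z x ω ≤ j := hit_le ⟨hj.1, hj.2⟩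
      rw [h] at h1
      exact absurd (top_le_iff.mp h1) (ENat.coe_ne_top j)
    · intro h
      apply hitTime_eq_top
      rintro ⟨j, hj1, hj2⟩
      exact h j ⟨hj1, hj2⟩
  rw [this]
  exact MeasurableSet.iInter fun j =>
    ((MeasurableSet.const _).inter
      (measurableSet_le ((measurable_walk hZ x (j - 1)).add (hZ j)) measurable_const)).compl

end Meas

lemma toENNReal_eq_tsum (t : ℕ∞) :
    (t : ℝ≥0∞) = ∑' k : ℕ, if (k : ℕ∞) < t then (1 : ℝ≥0∞) else 0 := by
  cases t with
  | top =>
    have h1 : ∀ k : ℕ, (if (k : ℕ∞) < (⊤ : ℕ∞) then (1 : ℝ≥0∞) else 0) = 1 := fun k =>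
      if_pos (Ne.lt_top (ENat.coe_ne_top k))
    rw [tsum_congr h1, ENNReal.tsum_const_eq_top_of_ne_zero one_ne_zero]
    rfl
  | coe m =>
    have h1 : ∀ k : ℕ, k ∉ Finset.range m →
        (if (k : ℕ∞) < ((m : ℕ) : ℕ∞) then (1 : ℝ≥0∞) else 0) = 0 := by
      intro k hk
      rw [if_neg]
      exact fun h => hk (Finset.mem_range.mpr (by exact_mod_cast h))
    rw [tsum_eq_sum h1]
    have h2 : ∀ k ∈ Finset.range m,
        (if (k : ℕ∞) < ((m : ℕ) : ℕ∞) then (1 : ℝ≥0∞) else 0) = 1 := by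
      intro k hk
      exact if_pos (by exact_mod_cast Finset.mem_range.mp hk)
    rw [Finset.sum_congr rfl h2]
    simp

lemma EtauW_eq_tsum [MeasurableSpace Ω] (P : Measure Ω) {Z : ℕ → Ω → ℝ}
    (hZ : ∀ n, Measurable (Z n)) (x : ℝ) :
    EtauW P Z x = ∑' k : ℕ, P {ω | (k : ℕ∞) < hitTime Z x ω} := by
  rw [EtauW]
  have h0 : ∀ ω, (hitTime Z x ω : ℝ≥0∞) =
      ∑' k : ℕ, Set.indicator {ω' | (k : ℕ∞) < hitTime Z x ω'} (fun _ => (1:ℝ≥0∞)) ω := by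
    intro ω
    rw [toENNReal_eq_tsum]
    exact tsum_congr fun k => by
      by_cases h : (k : ℕ∞) < hitTime Z x ω <;> simp [Set.indicator_apply, h]
  rw [lintegral_congr h0, lintegral_tsum fun k =>
    (measurable_const.indicator (measurableSet_lt_hitTime hZ x k)).aemeasurable]
  exact tsum_congr fun k => by
    rw [lintegral_indicator_const (measurableSet_lt_hitTime hZ x k), one_mul]

section Indep

open ProbabilityTheory

variable [MeasurableSpace Ω] {P : Measure Ω} [IsProbabilityMeasure P]

def Vk (Z : ℕ → Ω → ℝ) (k : ℕ) (ω : Ω) : Fin k → ℝ := fun i => Z (i.1 + 1) ω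

lemma measurable_Vk {Z : ℕ → Ω → ℝ} (hZ : ∀ n, Measurable (Z n)) (k : ℕ) :
    Measurable (Vk Z k) :=
  measurable_pi_lambda _ fun i => hZ _

lemma indepFun_Vk {Z : ℕ → Ω → ℝ} (hZm : ∀ n, Measurable (Z n))
    (hind : iIndepFun Z P) (k : ℕ) :
    IndepFun (Vk Z k) (Z (k + 1)) P := by
  classical
  have hdisj : Disjoint (Finset.Icc 1 k) ({k + 1} : Finset ℕ) := by
    simp only [Finset.disjoint_left, Finset.mem_Icc, Finset.mem_singleton]
    omega
  have h := hind.indepFun_finset (Finset.Icc 1 k) {k + 1} hdisj hZm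
  have hφ : Measurable (fun g : (Finset.Icc 1 k : Finset ℕ) → ℝ =>
      (fun i : Fin k => g ⟨i.1 + 1, by simp [Finset.mem_Icc]⟩)) :=
    measurable_pi_lambda _ fun i => measurable_pi_apply _
  have hψ : Measurable (fun g : ({k + 1} : Finset ℕ) → ℝ =>
      g ⟨k + 1, by simp⟩) := measurable_pi_apply _
  exact h.comp hφ hψ

lemma lintegral_split {Z : ℕ → Ω → ℝ} (hZm : ∀ n, Measurable (Z n))
    (hind : iIndepFun Z P)
    {ρ' : Measure ℝ} [IsProbabilityMeasure ρ'] {k : ℕ}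
    (hlaw : Measure.map (Z (k + 1)) P = ρ')
    {G : (Fin k → ℝ) × ℝ → ℝ≥0∞} (hG : Measurable G) :
    ∫⁻ ω, G (Vk Z k ω, Z (k + 1) ω) ∂P = ∫⁻ ω, ∫⁻ y, G (Vk Z k ω, y) ∂ρ' ∂P := by
  have hV : Measurable (Vk Z k) := measurable_Vk hZm k
  have hmap : Measure.map (fun ω => (Vk Z k ω, Z (k + 1) ω)) P =
      (Measure.map (Vk Z k) P).prod ρ' := by
    rw [← hlaw]
    exact (indepFun_iff_map_prod_eq_prod_map_map hV.aemeasurable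
      (hZm _).aemeasurable).mp (indepFun_Vk hZm hind k)
  haveI : IsProbabilityMeasure (Measure.map (Vk Z k) P) :=
    Measure.isProbabilityMeasure_map hV.aemeasurable
  calc ∫⁻ ω, G (Vk Z k ω, Z (k + 1) ω) ∂P
      = ∫⁻ p, G p ∂((Measure.map (Vk Z k) P).prod ρ') := by
        rw [← hmap, lintegral_map hG (hV.prodMk (hZm _))]
    _ = ∫⁻ v, ∫⁻ y, G (v, y) ∂ρ' ∂(Measure.map (Vk Z k) P) :=
        lintegral_prod _ hG.aemeasurable
    _ = ∫⁻ ω, ∫⁻ y, G (Vk Z k ω, y) ∂ρ' ∂P := by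
        rw [lintegral_map _ hV]
        exact Measurable.lintegral_prod_right (f := fun v y => G (v, y)) hG

end Indep

def fwalk (x : ℝ) {k : ℕ} (v : Fin k → ℝ) : ℕ → ℝ
  | 0 => x
  | m + 1 => max (fwalk x v m + if h : m < k then v ⟨m, h⟩ else 0) 0

lemma fwalk_eq {Z : ℕ → Ω → ℝ} {x : ℝ} {k : ℕ} {ω : Ω} :
    ∀ {m : ℕ}, m ≤ k → fwalk x (Vk Z k ω) m = walk Z x m ω := by
  intro m
  induction m with
  | zero => intro _; rfl
  | succ m ih =>
    intro h
    have hw : walk Z x (m + 1) ω = max (walk Z x m ω + Z (m + 1) ω) 0 := rfl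
    have hf : fwalk x (Vk Z k ω) (m + 1) =
        max (fwalk x (Vk Z k ω) m + if h : m < k then Vk Z k ω ⟨m, h⟩ else 0) 0 := rfl
    rw [hw, hf, dif_pos (by omega : m < k), ih (by omega)]
    rfl

lemma measurable_fwalk (x : ℝ) (k : ℕ) : ∀ m, Measurable fun v : Fin k → ℝ => fwalk x v m
  | 0 => measurable_const
  | (m + 1) => by
    have h1 : Measurable fun v : Fin k → ℝ => (if h : m < k then v ⟨m, h⟩ else 0) := by
      by_cases h : m < k
      · simp only [dif_pos h]; exact measurable_pi_apply _
      · simp only [dif_neg h]; exact measurable_const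
    exact (((measurable_fwalk x k m).add h1).max measurable_const)

def Bset (x : ℝ) (k : ℕ) : Set (Fin k → ℝ) :=
  {v | ∀ i : Fin k, ¬ (fwalk x v i.1 + v i ≤ 0)}

lemma measurableSet_Bset (x : ℝ) (k : ℕ) : MeasurableSet (Bset x k) := by
  have : Bset x k = ⋂ i : Fin k, {v : Fin k → ℝ | fwalk x v i.1 + v i ≤ 0}ᶜ := by
    ext v; simp [Bset]
  rw [this]
  exact MeasurableSet.iInter fun i =>
    (measurableSet_le ((measurable_fwalk x k i.1).add (measurable_pi_apply i))
      measurable_const).compl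

lemma mem_Bset_iff {Z : ℕ → Ω → ℝ} {x : ℝ} {k : ℕ} {ω : Ω} :
    Vk Z k ω ∈ Bset x k ↔ (k : ℕ∞) < hitTime Z x ω := by
  rw [lt_hitTime_iff']
  constructor
  · intro h j h1 hk hc
    have hi : j - 1 < k := by omega
    apply h ⟨j - 1, hi⟩
    have h2 : fwalk x (Vk Z k ω) (j - 1) = walk Z x (j - 1) ω := fwalk_eq (by omega)
    have h3 : Vk Z k ω ⟨j - 1, hi⟩ = Z j ω := by
      have : (j - 1) + 1 = j := by omega
      simp only [Vk, this]
    rw [h2, h3]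
    exact hc
  · intro h i hc
    apply h (i.1 + 1) (by omega) (by omega)
    have h2 : fwalk x (Vk Z k ω) i.1 = walk Z x ((i.1 + 1) - 1) ω := by
      have : (i.1 + 1) - 1 = i.1 := by omega
      rw [this]; exact fwalk_eq (by omega)
    have h3 : Vk Z k ω i = Z (i.1 + 1) ω := rfl
    rw [h2, h3] at hc
    exact hc

lemma preimage_Bset [MeasurableSpace Ω] {Z : ℕ → Ω → ℝ} {x : ℝ} {k : ℕ} :
    Vk Z k ⁻¹' Bset x k = {ω | (k : ℕ∞) < hitTime Z x ω} := by
  ext ω; exact mem_Bset_iff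

section Part1

open ProbabilityTheory

variable [MeasurableSpace Ω] {P : Measure Ω} [IsProbabilityMeasure P]

theorem EtauW_ne_top (P : Measure Ω) [IsProbabilityMeasure P]
    (ρ : Measure ℝ) [IsProbabilityMeasure ρ] (Y : ℕ → Ω → ℝ)
    (hYm : ∀ n, Measurable (Y n)) (hYlaw : ∀ n, Measure.map (Y n) P = ρ)
    (hYind : iIndepFun Y P)
    (hmom : Integrable (fun y => y) ρ) (hdrift : ∫ y, y ∂ρ < 0) :
    ∀ x : ℝ, 0 ≤ x → EtauW P Y x ≠ ⊤ := by
  -- Choose a truncation level M with negative truncated drift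
  have hconv : Tendsto (fun M : ℕ => ∫ y, max y (-(M : ℝ)) ∂ρ) atTop
      (𝓝 (∫ y, y ∂ρ)) := by
    apply tendsto_integral_of_dominated_convergence (fun y => |y|)
      (fun M => (measurable_id.max measurable_const).aestronglyMeasurable)
      hmom.abs
    · intro M
      filter_upwards with y
      show ‖max y (-(M : ℝ))‖ ≤ |y|
      rw [Real.norm_eq_abs]
      rcases le_total (-(M : ℝ)) y with h | h
      · rw [max_eq_left h]
      · rw [max_eq_right h, abs_neg, Nat.abs_cast]
        have : (M : ℝ) ≤ -y := by linarith
        have h0 : (0:ℝ) ≤ (M:ℝ) := Nat.cast_nonneg M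
        rw [abs_of_nonpos (by linarith)]
        linarith
    · filter_upwards with y
      have hev : ∀ᶠ M : ℕ in atTop, max y (-(M : ℝ)) = y := by
        filter_upwards [eventually_ge_atTop ⌈|y|⌉₊] with M hM
        apply max_eq_left
        have h1 : |y| ≤ (M : ℝ) := le_trans (Nat.le_ceil _) (by exact_mod_cast hM)
        have := neg_abs_le y
        linarith
      exact Tendsto.congr' (by filter_upwards [hev] with M hM; exact hM.symm) tendsto_const_nhds
  obtain ⟨M, hM⟩ := (hconv.eventually_lt_const hdrift).exists
  -- the truncated increments
  set g : ℝ → ℝ := fun r => max r (-(M : ℝ)) with hg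
  have hgm : Measurable g := measurable_id.max measurable_const
  set Z : ℕ → Ω → ℝ := fun n => g ∘ Y n with hZ
  have hZm : ∀ n, Measurable (Z n) := fun n => hgm.comp (hYm n)
  set ρM : Measure ℝ := Measure.map g ρ with hρM
  haveI : IsProbabilityMeasure ρM := Measure.isProbabilityMeasure_map hgm.aemeasurable
  have hZlaw : ∀ n, Measure.map (Z n) P = ρM := fun n => by
    rw [hZ, hρM, ← Measure.map_map hgm (hYm n), hYlaw n]
  have hZind : iIndepFun Z P :=
    hYind.comp (fun _ => g) (fun _ => hgm)
  set mM : ℝ := ∫ y, y ∂ρM with hmM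
  have hmMeq : mM = ∫ y, g y ∂ρ := by
    have h := integral_map (μ := ρ) (f := id) hgm.aemeasurable measurable_id.aestronglyMeasurable
    rw [hmM, hρM]
    simpa using h
  have hmMneg : mM < 0 := by rw [hmMeq]; exact hM
  have hZlb : ∀ n ω, -(M : ℝ) ≤ Z n ω := fun n ω => le_max_right _ _
  have hZY : ∀ n ω, Y n ω ≤ Z n ω := fun n ω => le_max_left _ _
  have hYint : ∀ n, Integrable (Y n) P := by
    intro n
    have h1 : Integrable (fun y : ℝ => y) (Measure.map (Y n) P) := by rw [hYlaw n]; exact hmom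
    exact (integrable_map_measure aestronglyMeasurable_id (hYm n).aemeasurable).mp h1
  have hZint : ∀ n, Integrable (Z n) P := by
    intro n
    apply Integrable.mono' ((hYint n).abs.add (integrable_const (M : ℝ)))
      (hZm n).aestronglyMeasurable
    filter_upwards with ω
    show ‖Z n ω‖ ≤ |Y n ω| + (M : ℝ)
    rw [Real.norm_eq_abs]
    rcases le_total (-(M : ℝ)) (Y n ω) with h | h
    · have : Z n ω = Y n ω := max_eq_left h
      rw [this]
      have h0 : (0:ℝ) ≤ (M:ℝ) := Nat.cast_nonneg M
      linarith [abs_nonneg (Y n ω)]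
    · have : Z n ω = -(M : ℝ) := max_eq_right h
      rw [this, abs_neg, Nat.abs_cast]
      linarith [abs_nonneg (Y n ω)]
  intro x hx
  -- the key events
  set A : ℕ → Set Ω := fun k => {ω | (k : ℕ∞) < hitTime Z x ω} with hA
  have hAmeas : ∀ k, MeasurableSet (A k) := fun k => measurableSet_lt_hitTime hZm x k
  -- Wald identity for each term
  have key : ∀ k, ∫ ω, (A k).indicator (Z (k + 1)) ω ∂P = (P (A k)).toReal * mM := by
    intro k
    have hI : IndepFun (fun ω => (Bset x k).indicator (fun _ => (1 : ℝ)) (Vk Z k ω))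
        (Z (k + 1)) P :=
      (indepFun_Vk hZm hZind k).comp (measurable_const.indicator (measurableSet_Bset x k))
        measurable_id
    have h1 := IndepFun.integral_fun_mul_eq_mul_integral hI
      ((measurable_const.indicator (measurableSet_Bset x k)).comp
        (measurable_Vk hZm k)).aestronglyMeasurable
      (hZm (k + 1)).aestronglyMeasurable
    have h2 : ∀ ω, (Bset x k).indicator (fun _ => (1 : ℝ)) (Vk Z k ω) * Z (k + 1) ω =
        (A k).indicator (Z (k + 1)) ω := by
      intro ω
      by_cases h : ω ∈ A k
      · have hb : Vk Z k ω ∈ Bset x k := mem_Bset_iff.mpr h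
        rw [Set.indicator_of_mem hb, Set.indicator_of_mem h, one_mul]
      · have hb : Vk Z k ω ∉ Bset x k := fun hc => h (mem_Bset_iff.mp hc)
        rw [Set.indicator_of_notMem hb, Set.indicator_of_notMem h, zero_mul]
    rw [integral_congr_ae (Filter.Eventually.of_forall h2)] at h1
    rw [h1]
    congr 1
    · have h3 : (fun ω => (Bset x k).indicator (fun _ => (1 : ℝ)) (Vk Z k ω)) =
          (A k).indicator (fun _ => (1 : ℝ)) := by
        funext ω
        by_cases h : ω ∈ A k
        · rw [Set.indicator_of_mem (mem_Bset_iff.mpr h), Set.indicator_of_mem h]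
        · rw [Set.indicator_of_notMem (fun hc => h (mem_Bset_iff.mp hc)),
            Set.indicator_of_notMem h]
      rw [h3, integral_indicator_const (1 : ℝ) (hAmeas k), smul_eq_mul, mul_one]
      rfl
    · have h := integral_map (μ := P) (f := id) (hZm (k + 1)).aemeasurable
        measurable_id.aestronglyMeasurable
      rw [hZlaw (k + 1)] at h
      rw [hmM]
      simpa using h.symm
  -- pointwise lower bound for partial sums
  have sumlb : ∀ (u : ℕ) (ω : Ω),
      (∀ j, 1 ≤ j → j < u → ¬ (walk Z x (j - 1) ω + Z j ω ≤ 0)) →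
      -(x + (M : ℝ)) ≤ ∑ k ∈ Finset.range u, Z (k + 1) ω := by
    intro u ω hu
    cases u with
    | zero =>
      simp only [Finset.range_zero, Finset.sum_empty]
      have h0 : (0:ℝ) ≤ (M:ℝ) := Nat.cast_nonneg M
      linarith
    | succ m =>
      have hw : walk Z x m ω = x + ∑ k ∈ Finset.range m, Z (k + 1) ω :=
        walk_eq_sum (fun j h1 h2 => hu j h1 (by omega))
      have h0 : 0 ≤ walk Z x m ω := walk_nonneg hx m ω
      rw [Finset.sum_range_succ]
      have := hZlb (m + 1) ω
      linarith
  have pointwise : ∀ (n : ℕ) (ω : Ω),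
      -(x + (M : ℝ)) ≤ ∑ k ∈ Finset.range n, (A k).indicator (Z (k + 1)) ω := by
    intro n ω
    by_cases hn : (n : ℕ∞) ≤ hitTime Z x ω
    · have heq : ∑ k ∈ Finset.range n, (A k).indicator (Z (k + 1)) ω =
          ∑ k ∈ Finset.range n, Z (k + 1) ω := by
        apply Finset.sum_congr rfl
        intro k hk
        have hkA : ω ∈ A k :=
          lt_of_lt_of_le (by exact_mod_cast Finset.mem_range.mp hk) hn
        exact Set.indicator_of_mem hkA _
      rw [heq]
      apply sumlb
      intro j h1 h2 hc
      have ht : hitTime Z x ω ≤ j := hit_le ⟨h1, hc⟩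
      have : (j : ℕ∞) < (n : ℕ∞) := by exact_mod_cast h2
      exact absurd (lt_of_le_of_lt (hn.trans ht) this) (lt_irrefl _)
    · push_neg at hn
      have hne : {j | hcond Z x ω j}.Nonempty := by
        by_contra h
        rw [hitTime_eq_top h] at hn
        exact absurd hn (not_top_lt)
      set t : ℕ := sInf {j | hcond Z x ω j} with htdef
      have hτt : hitTime Z x ω = (t : ℕ∞) := hitTime_eq_coe_sInf hne
      have htmem : hcond Z x ω t := Nat.sInf_mem hne
      have htn : t < n := by rw [hτt] at hn; exact_mod_cast hn
      have heq : ∑ k ∈ Finset.range n, (A k).indicator (Z (k + 1)) ω =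
          ∑ k ∈ Finset.range t, Z (k + 1) ω := by
        rw [← Finset.sum_subset (Finset.range_subset_range.mpr htn.le)]
        · apply Finset.sum_congr rfl
          intro k hk
          have hkA : ω ∈ A k := by
            rw [hA]; simp only [Set.mem_setOf_eq, hτt]
            exact_mod_cast Finset.mem_range.mp hk
          exact Set.indicator_of_mem hkA _
        · intro k hk hk'
          have hkA : ω ∉ A k := by
            rw [hA]; simp only [Set.mem_setOf_eq, hτt]
            intro hlt
            exact hk' (Finset.mem_range.mpr (by exact_mod_cast hlt))
          exact Set.indicator_of_notMem hkA _
      rw [heq]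
      apply sumlb
      intro j h1 h2 hc
      have := Nat.sInf_le (show j ∈ {j | hcond Z x ω j} from ⟨h1, hc⟩)
      omega
  -- integrate
  have hint : ∀ k, Integrable ((A k).indicator (Z (k + 1))) P := fun k =>
    (hZint (k + 1)).indicator (hAmeas k)
  have hsum_bound : ∀ n : ℕ, ∑ k ∈ Finset.range n, (P (A k)).toReal ≤ (x + M) / (-mM) := by
    intro n
    have h1 : -(x + (M : ℝ)) ≤ ∫ ω, ∑ k ∈ Finset.range n, (A k).indicator (Z (k + 1)) ω ∂P := by
      have h2 := integral_mono (integrable_const (-(x + (M : ℝ))))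
        (integrable_finset_sum _ (fun k _ => hint k)) (pointwise n)
      rwa [integral_const, probReal_univ, one_smul] at h2
    rw [integral_finset_sum _ (fun k _ => hint k)] at h1
    rw [Finset.sum_congr rfl (fun k _ => key k), ← Finset.sum_mul] at h1
    have hpos : (0:ℝ) < -mM := by linarith
    rw [le_div_iff₀ hpos]
    nlinarith [h1]
  have h3 : ∀ n : ℕ, ∑ k ∈ Finset.range n, P (A k) ≤ ENNReal.ofReal ((x + M) / (-mM)) := by
    intro n
    have he : ∑ k ∈ Finset.range n, P (A k) =
        ENNReal.ofReal (∑ k ∈ Finset.range n, (P (A k)).toReal) := by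
      rw [ENNReal.ofReal_sum_of_nonneg (fun _ _ => ENNReal.toReal_nonneg)]
      exact Finset.sum_congr rfl fun k _ => (ENNReal.ofReal_toReal (measure_ne_top P _)).symm
    rw [he]
    exact ENNReal.ofReal_le_ofReal (hsum_bound n)
  have h4 : EtauW P Z x ≤ ENNReal.ofReal ((x + M) / (-mM)) := by
    rw [EtauW_eq_tsum P hZm x]
    exact ENNReal.summable.tsum_le_of_sum_range_le h3
  have h5 : EtauW P Y x ≤ EtauW P Z x := by
    apply lintegral_mono
    intro ω
    exact ENat.toENNReal_mono (hitTime_mono hZY x ω)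
  exact fun hc => absurd (hc ▸ (h5.trans h4)) (by simp [lt_top_iff_ne_top, ENNReal.ofReal_lt_top, top_le_iff])

end Part1

section Part2

open ProbabilityTheory

variable [MeasurableSpace Ω]

theorem exists_stat (P : Measure Ω) [IsProbabilityMeasure P]
    (ρ : Measure ℝ) [IsProbabilityMeasure ρ] (Y : ℕ → Ω → ℝ)
    (hYm : ∀ n, Measurable (Y n)) (hYlaw : ∀ n, Measure.map (Y n) P = ρ)
    (hYind : iIndepFun Y P)
    (hfin : EtauW P Y 0 ≠ ⊤) :
    ∃ μ : Measure ℝ, IsProbabilityMeasure μ ∧ μ (Set.Iio 0) = 0 ∧ IsStatMeasure P Y μ ∧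
      ∀ f : ℝ → ℝ≥0∞, Measurable f → ∫⁻ x, PwE ρ f x ∂μ = ∫⁻ x, f x ∂μ := by
  set X : ℕ → Ω → ℝ := fun k => walk Y 0 k with hX
  have hXm : ∀ k, Measurable (X k) := measurable_walk hYm 0
  set A : ℕ → Set Ω := fun k => {ω | (k : ℕ∞) < hitTime Y 0 ω} with hA
  have hAmeas : ∀ k, MeasurableSet (A k) := measurableSet_lt_hitTime hYm 0
  set T : Set Ω := {ω | hitTime Y 0 ω ≠ ⊤} with hT
  have hTmeas : MeasurableSet T := (measurableSet_hitTime_top hYm 0).compl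
  have hmeasτ : Measurable fun ω => ((hitTime Y 0 ω : ℕ∞) : ℝ≥0∞) := by
    have h0 : (fun ω => ((hitTime Y 0 ω : ℕ∞) : ℝ≥0∞)) =
        fun ω => ∑' k : ℕ, (A k).indicator (fun _ => (1 : ℝ≥0∞)) ω := by
      funext ω
      rw [toENNReal_eq_tsum]
      refine tsum_congr fun k => ?_
      by_cases h : (k : ℕ∞) < hitTime Y 0 ω <;> simp [Set.indicator_apply, hA, h]
    rw [h0]
    exact Measurable.ennreal_tsum fun k => measurable_const.indicator (hAmeas k)
  have hae : ∀ᵐ ω ∂P, hitTime Y 0 ω ≠ ⊤ := by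
    have h := ae_lt_top hmeasτ hfin
    filter_upwards [h] with ω hω hc
    rw [hc] at hω
    simp at hω
  set D : ℕ → Set Ω := fun k => A k ∩ T with hD
  have hDmeas : ∀ k, MeasurableSet (D k) := fun k => (hAmeas k).inter hTmeas
  have hDAe : ∀ k, D k =ᵐ[P] A k := by
    intro k
    rw [Filter.eventuallyEq_set]
    filter_upwards [hae] with ω hω
    simp only [hD, hT, Set.mem_inter_iff, Set.mem_setOf_eq]
    tauto
  have hDA : ∀ k, P.restrict (D k) = P.restrict (A k) := fun k =>
    Measure.restrict_congr_set (hDAe k)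
  set Etau : ℝ≥0∞ := EtauW P Y 0 with hEtau
  have hEone : (1 : ℝ≥0∞) ≤ Etau := by
    have hA0 : A 0 = Set.univ := by
      ext ω
      simp only [hA, Set.mem_setOf_eq, Set.mem_univ, iff_true]
      exact zero_lt_hitTime (Z := Y) (x := (0:ℝ)) (ω := ω)
    have h1 : P (A 0) ≤ ∑' k, P (A k) := ENNReal.le_tsum 0
    rw [hA0, measure_univ] at h1
    rw [hEtau, EtauW_eq_tsum P hYm 0]
    exact h1
  have hEne0 : Etau ≠ 0 := fun h => by simp [h] at hEone
  set ν : Measure ℝ := Measure.sum (fun k => Measure.map (X k) (P.restrict (D k))) with hν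
  have hνapp : ∀ {g : ℝ → ℝ≥0∞}, Measurable g →
      ∫⁻ r, g r ∂ν = ∑' k, ∫⁻ ω in A k, g (X k ω) ∂P := by
    intro g hg
    rw [hν, lintegral_sum_measure]
    exact tsum_congr fun k => by rw [lintegral_map hg (hXm k), hDA k]
  have hstat0 : ∀ (S : Set ℝ), MeasurableSet S →
      ν S = ∫⁻ ω, ∑ k ∈ Finset.range (hitTime Y 0 ω).toNat,
        S.indicator (fun _ => (1 : ℝ≥0∞)) (walk Y 0 k ω) ∂P := by
    intro S hS
    have hpre : ∀ k, MeasurableSet (X k ⁻¹' S) := fun k => (hXm k) hS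
    have h2 : ∀ k ω, S.indicator (fun _ => (1 : ℝ≥0∞)) (X k ω) =
        (X k ⁻¹' S).indicator (fun _ => (1 : ℝ≥0∞)) ω := by
      intro k ω
      by_cases h : X k ω ∈ S <;> simp [Set.indicator_apply, h]
    have h1 : ν S = ∑' k, ∫⁻ ω, (D k).indicator
        (fun ω' => S.indicator (fun _ => (1 : ℝ≥0∞)) (X k ω')) ω ∂P := by
      rw [hν, Measure.sum_apply _ hS]
      refine tsum_congr fun k => ?_
      rw [Measure.map_apply (hXm k) hS, lintegral_indicator (hDmeas k)]
      calc P.restrict (D k) (X k ⁻¹' S)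
          = ∫⁻ ω, (X k ⁻¹' S).indicator (fun _ => (1 : ℝ≥0∞)) ω ∂(P.restrict (D k)) := by
            rw [lintegral_indicator_const (hpre k), one_mul]
        _ = ∫⁻ ω in D k, S.indicator (fun _ => (1 : ℝ≥0∞)) (X k ω) ∂P :=
            lintegral_congr fun ω => (h2 k ω).symm
    rw [h1, ← lintegral_tsum (f := fun k ω => (D k).indicator
        (fun ω' => S.indicator (fun _ => (1 : ℝ≥0∞)) (X k ω')) ω) (fun k =>
      (((measurable_const.indicator hS).comp (hXm k)).indicator (hDmeas k)).aemeasurable)]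
    refine lintegral_congr fun ω => ?_
    by_cases hτ : hitTime Y 0 ω = ⊤
    · have hz : ∀ k, (D k).indicator
          (fun ω' => S.indicator (fun _ => (1 : ℝ≥0∞)) (X k ω')) ω = 0 := by
        intro k
        apply Set.indicator_of_notMem
        rintro ⟨-, h2'⟩
        exact h2' hτ
      rw [tsum_congr hz]
      simp [hτ]
    · have hcoe : hitTime Y 0 ω = ((hitTime Y 0 ω).toNat : ℕ∞) := (ENat.coe_toNat hτ).symm
      set t := (hitTime Y 0 ω).toNat with htdef
      have hmem : ∀ k, ω ∈ A k ↔ k < t := by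
        intro k
        rw [hA]
        simp only [Set.mem_setOf_eq]
        rw [hcoe]
        exact Nat.cast_lt
      rw [tsum_eq_sum (s := Finset.range t) ?_]
      · refine Finset.sum_congr rfl fun k hk => ?_
        exact Set.indicator_of_mem (Set.mem_inter ((hmem k).mpr (Finset.mem_range.mp hk)) hτ) _
      · intro k hk
        apply Set.indicator_of_notMem
        rintro ⟨h1', -⟩
        exact hk (Finset.mem_range.mpr ((hmem k).mp h1'))
  have hfin' : Etau ≠ ⊤ := hfin
  have hνuniv : ν Set.univ = Etau := by
    rw [hν, Measure.sum_apply _ MeasurableSet.univ, hEtau, EtauW_eq_tsum P hYm 0]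
    refine tsum_congr fun k => ?_
    rw [Measure.map_apply (hXm k) MeasurableSet.univ, Set.preimage_univ,
      Measure.restrict_apply MeasurableSet.univ, Set.univ_inter]
    exact measure_congr (hDAe k)
  haveI hμprob : IsProbabilityMeasure (Etau⁻¹ • ν) := by
    constructor
    rw [Measure.smul_apply, hνuniv, smul_eq_mul, ENNReal.inv_mul_cancel hEne0 hfin']
  have hIio : ν (Set.Iio 0) = 0 := by
    rw [hν, Measure.sum_apply _ measurableSet_Iio]
    have hz : ∀ k, Measure.map (X k) (P.restrict (D k)) (Set.Iio 0) = 0 := by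
      intro k
      rw [Measure.map_apply (hXm k) measurableSet_Iio]
      have he : X k ⁻¹' (Set.Iio 0) = ∅ := by
        ext ω
        simp only [Set.mem_preimage, Set.mem_Iio, Set.mem_empty_iff_false, iff_false, not_lt]
        exact walk_nonneg le_rfl k ω
      rw [he]
      simp
    simp [hz]
  have hinv : ∀ f : ℝ → ℝ≥0∞, Measurable f →
      ∫⁻ r, PwE ρ f r ∂ν = ∫⁻ r, f r ∂ν := by
    intro f hf
    have hPwEm : Measurable (PwE ρ f) := by
      have hm : Measurable fun p : ℝ × ℝ => f (max (p.1 + p.2) 0) :=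
        hf.comp ((measurable_fst.add measurable_snd).max measurable_const)
      exact Measurable.lintegral_prod_right (f := fun x y => f (max (x + y) 0)) hm
    have key2 : ∀ k, ∫⁻ ω in A k, PwE ρ f (X k ω) ∂P
        = ∫⁻ ω in A k, f (X (k + 1) ω) ∂P := by
      intro k
      set G : (Fin k → ℝ) × ℝ → ℝ≥0∞ := fun p =>
        (Bset 0 k).indicator (fun _ => (1 : ℝ≥0∞)) p.1 * f (max (fwalk 0 p.1 k + p.2) 0)
        with hGdef
      have hGm : Measurable G := by
        apply Measurable.mul
        · exact (measurable_const.indicator (measurableSet_Bset 0 k)).comp measurable_fst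
        · exact hf.comp ((((measurable_fwalk 0 k k).comp measurable_fst).add
            measurable_snd).max measurable_const)
      have hsplit := lintegral_split hYm hYind (hYlaw (k + 1)) hGm
      have hL : ∫⁻ ω, G (Vk Y k ω, Y (k + 1) ω) ∂P = ∫⁻ ω in A k, f (X (k + 1) ω) ∂P := by
        rw [← lintegral_indicator (hAmeas k)]
        refine lintegral_congr fun ω => ?_
        have hfw : fwalk 0 (Vk Y k ω) k = walk Y 0 k ω := fwalk_eq le_rfl
        show (Bset 0 k).indicator (fun _ => (1 : ℝ≥0∞)) (Vk Y k ω)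
            * f (max (fwalk 0 (Vk Y k ω) k + Y (k + 1) ω) 0)
            = (A k).indicator (fun ω' => f (X (k + 1) ω')) ω
        rw [hfw]
        by_cases h : ω ∈ A k
        · rw [Set.indicator_of_mem (mem_Bset_iff.mpr h), Set.indicator_of_mem h, one_mul]
          rfl
        · rw [Set.indicator_of_notMem (fun hc => h (mem_Bset_iff.mp hc)),
            Set.indicator_of_notMem h, zero_mul]
      have hR : ∫⁻ ω, ∫⁻ y, G (Vk Y k ω, y) ∂ρ ∂P
          = ∫⁻ ω in A k, PwE ρ f (X k ω) ∂P := by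
        rw [← lintegral_indicator (hAmeas k)]
        refine lintegral_congr fun ω => ?_
        have hfw : fwalk 0 (Vk Y k ω) k = walk Y 0 k ω := fwalk_eq le_rfl
        have hin : ∀ y : ℝ, G (Vk Y k ω, y) =
            (Bset 0 k).indicator (fun _ => (1 : ℝ≥0∞)) (Vk Y k ω)
              * f (max (X k ω + y) 0) := by
          intro y
          show (Bset 0 k).indicator (fun _ => (1 : ℝ≥0∞)) (Vk Y k ω)
              * f (max (fwalk 0 (Vk Y k ω) k + y) 0) = _
          rw [hfw]
        have hmf : Measurable fun y : ℝ => f (max (X k ω + y) 0) := by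
          exact hf.comp ((measurable_const.add measurable_id).max measurable_const)
        rw [lintegral_congr hin, lintegral_const_mul _ hmf]
        by_cases h : ω ∈ A k
        · rw [Set.indicator_of_mem (mem_Bset_iff.mpr h), Set.indicator_of_mem h, one_mul]
          rfl
        · rw [Set.indicator_of_notMem (fun hc => h (mem_Bset_iff.mp hc)),
            Set.indicator_of_notMem h, zero_mul]
      rw [← hR, ← hsplit, hL]
    have hmeas1 : ∀ k, Measurable ((A k).indicator (fun ω => f (X (k + 1) ω))) := fun k =>
      (hf.comp (hXm (k + 1))).indicator (hAmeas k)
    have hmeas0 : ∀ k, Measurable ((A k).indicator (fun ω => f (X k ω))) := fun k =>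
      (hf.comp (hXm k)).indicator (hAmeas k)
    rw [hνapp hPwEm, hνapp hf]
    calc ∑' k, ∫⁻ ω in A k, PwE ρ f (X k ω) ∂P
        = ∑' k, ∫⁻ ω in A k, f (X (k + 1) ω) ∂P := tsum_congr key2
      _ = ∫⁻ ω, ∑' k, (A k).indicator (fun ω' => f (X (k + 1) ω')) ω ∂P := by
          rw [lintegral_tsum (fun k => (hmeas1 k).aemeasurable)]
          exact tsum_congr fun k => (lintegral_indicator (hAmeas k) _).symm
      _ = ∫⁻ ω, ∑' k, (A k).indicator (fun ω' => f (X k ω')) ω ∂P := by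
          apply lintegral_congr_ae
          filter_upwards [hae] with ω hτ
          have hcoe : hitTime Y 0 ω = ((hitTime Y 0 ω).toNat : ℕ∞) := (ENat.coe_toNat hτ).symm
          set t := (hitTime Y 0 ω).toNat with htdef
          have hmem : ∀ k, ω ∈ A k ↔ k < t := by
            intro k
            rw [hA]
            simp only [Set.mem_setOf_eq]
            rw [hcoe]
            exact Nat.cast_lt
          have hout1 : ∀ k ∉ Finset.range t,
              (A k).indicator (fun ω' => f (X (k + 1) ω')) ω = 0 := fun k hk =>
            Set.indicator_of_notMem
              (fun hc => hk (Finset.mem_range.mpr ((hmem k).mp hc))) _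
          have hout0 : ∀ k ∉ Finset.range t,
              (A k).indicator (fun ω' => f (X k ω')) ω = 0 := fun k hk =>
            Set.indicator_of_notMem
              (fun hc => hk (Finset.mem_range.mpr ((hmem k).mp hc))) _
          rw [tsum_eq_sum hout1, tsum_eq_sum hout0]
          have hin1 : ∀ k ∈ Finset.range t,
              (A k).indicator (fun ω' => f (X (k + 1) ω')) ω = f (X (k + 1) ω) := fun k hk =>
            Set.indicator_of_mem ((hmem k).mpr (Finset.mem_range.mp hk)) _
          have hin0 : ∀ k ∈ Finset.range t,
              (A k).indicator (fun ω' => f (X k ω')) ω = f (X k ω) := fun k hk =>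
            Set.indicator_of_mem ((hmem k).mpr (Finset.mem_range.mp hk)) _
          rw [Finset.sum_congr rfl hin1, Finset.sum_congr rfl hin0]
          have ht1 : 1 ≤ t := by
            have h0 : ((0 : ℕ) : ℕ∞) < hitTime Y 0 ω := zero_lt_hitTime
            rw [hcoe] at h0
            exact_mod_cast h0
          obtain ⟨m, hm⟩ : ∃ m, t = m + 1 := ⟨t - 1, by omega⟩
          rw [hm, Finset.sum_range_succ, Finset.sum_range_succ']
          congr 1
          have hXt : X (m + 1) ω = 0 := by
            have hne : {j | hcond Y 0 ω j}.Nonempty := by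
              by_contra h
              exact hτ (hitTime_eq_top h)
            have hsinf : hitTime Y 0 ω = (sInf {j | hcond Y 0 ω j} : ℕ) :=
              hitTime_eq_coe_sInf hne
            have hts : sInf {j | hcond Y 0 ω j} = m + 1 := by
              rw [hsinf] at hcoe
              rw [← hm]
              exact_mod_cast hcoe
            have hmem2 : hcond Y 0 ω (m + 1) := hts ▸ Nat.sInf_mem hne
            have h2 := hmem2.2
            simp only [Nat.add_sub_cancel] at h2
            show max (walk Y 0 m ω + Y (m + 1) ω) 0 = 0
            exact max_eq_right h2
          rw [hXt]
          rfl
      _ = ∑' k, ∫⁻ ω in A k, f (X k ω) ∂P := by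
          rw [lintegral_tsum (fun k => (hmeas0 k).aemeasurable)]
          exact tsum_congr fun k => lintegral_indicator (hAmeas k) _
  refine ⟨Etau⁻¹ • ν, hμprob, ?_, ?_, ?_⟩
  · rw [Measure.smul_apply, hIio, smul_eq_mul, mul_zero]
  · intro S hS
    rw [Measure.smul_apply, smul_eq_mul, hstat0 S hS, ← hEtau, ENNReal.div_eq_inv_mul]
  · intro f hf
    rw [lintegral_smul_measure, lintegral_smul_measure, hinv f hf]

end Part2

end SP

/-- Proposition 4.1: if `ρ` has a finite first moment and a negative drift then
`𝔼_x τ < ∞` for every `x ≥ 0`, and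
`μ(f) = (1/𝔼₀τ) 𝔼₀[∑_{k<τ} f(X_k)]` defines a `P`-invariant probability measure on
`ℝ₊`. -/
theorem stmt15 {Ω : Type*} [MeasurableSpace Ω] (P : Measure Ω) [IsProbabilityMeasure P]
    (ρ : Measure ℝ) [IsProbabilityMeasure ρ] (Y : ℕ → Ω → ℝ) (hiid : IsIIDSeq P Y ρ)
    (hmom : Integrable (fun y => y) ρ) (hdrift : ∫ y, y ∂ρ < 0) :
    (∀ x : ℝ, 0 ≤ x → EtauW P Y x ≠ ⊤) ∧
    ∃ μ : Measure ℝ, IsProbabilityMeasure μ ∧ μ (Set.Iio 0) = 0 ∧ IsStatMeasure P Y μ ∧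
      ∀ f : ℝ → ℝ≥0∞, Measurable f → ∫⁻ x, PwE ρ f x ∂μ = ∫⁻ x, f x ∂μ := by
  obtain ⟨hYm, hYlaw, hYind⟩ := hiid
  have h1 := SP.EtauW_ne_top P ρ Y hYm hYlaw hYind hmom hdrift
  exact ⟨fun x hx => h1 x hx, SP.exists_stat P ρ Y hYm hYlaw hYind (h1 0 le_rfl)⟩

end
end

section
/- Let ρ be a Borel probability measure on ℝ and s ∈ [1,∞) be such that ∫_ℝ |y|^s dρ(y) < ∞. Then lim_{x→+∞} ∫_ℝ (max(x+y,0)^s − x^s)/x^{s−1} dρ(y) = s·∫_ℝ y dρ(y). -/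
open MeasureTheory Filter Set Topology
open scoped ENNReal NNReal ENat

noncomputable section

private lemma abs_le_one_add_rpow (s : ℝ) (hs : 1 ≤ s) (y : ℝ) : |y| ≤ 1 + |y| ^ s := by
  rcases le_total |y| 1 with h | h
  · have := Real.rpow_nonneg (abs_nonneg y) s; linarith
  · have h1 : |y| = |y| ^ (1:ℝ) := (Real.rpow_one _).symm
    have h2 : |y| ^ (1:ℝ) ≤ |y| ^ s := Real.rpow_le_rpow_of_exponent_le h hs
    calc |y| = |y| ^ (1:ℝ) := h1
      _ ≤ |y| ^ s := h2
      _ ≤ 1 + |y| ^ s := by linarith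

private lemma max_rpow_le (s : ℝ) (hs : 0 ≤ s) (y : ℝ) : max 1 |y| ^ s ≤ 1 + |y| ^ s := by
  rcases le_total |y| 1 with h | h
  · rw [max_eq_left h, Real.one_rpow]
    have := Real.rpow_nonneg (abs_nonneg y) s; linarith
  · rw [max_eq_right h]
    linarith

/-- Lemma 4.2: if `∫ |y|^s dρ(y) < ∞` for some `s ≥ 1`, then
`∫ (max(x+y,0)^s - x^s)/x^{s-1} dρ(y) → s ∫ y dρ(y)` as `x → +∞`. -/
theorem stmt16 (ρ : Measure ℝ) [IsProbabilityMeasure ρ] (s : ℝ) (hs : 1 ≤ s)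
    (hmom : ∫⁻ y, ENNReal.ofReal (|y| ^ s) ∂ρ ≠ ⊤) :
    Tendsto (fun x : ℝ => ∫ y, (max (x + y) 0 ^ s - x ^ s) / x ^ (s - 1) ∂ρ) atTop
      (𝓝 (s * ∫ y, y ∂ρ)) := by
  have hs0 : (0:ℝ) ≤ s := by linarith
  have h2s : (1:ℝ) ≤ 2 ^ s := by
    rw [show (1:ℝ) = 2 ^ (0:ℝ) by simp]
    exact Real.rpow_le_rpow_of_exponent_le one_le_two hs0
  -- integrability of the bound
  have cont_s : Continuous fun y : ℝ => |y| ^ s :=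
    continuous_abs.rpow_const fun y => Or.inr hs0
  have int_s : Integrable (fun y : ℝ => |y| ^ s) ρ := by
    refine ⟨cont_s.aestronglyMeasurable, ?_⟩
    rw [hasFiniteIntegral_iff_ofReal (ae_of_all _ fun y => Real.rpow_nonneg (abs_nonneg y) s)]
    exact lt_top_iff_ne_top.2 hmom
  have int_base : Integrable (fun y : ℝ => 1 + |y| ^ s) ρ := (integrable_const 1).add int_s
  have int_bound : Integrable (fun y : ℝ => s * 2 ^ s * (1 + |y| ^ s)) ρ := int_base.const_mul _
  -- key: dominated convergence to ∫ s*y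
  have key : Tendsto (fun x : ℝ => ∫ y, (max (x + y) 0 ^ s - x ^ s) / x ^ (s - 1) ∂ρ) atTop
      (𝓝 (∫ y, s * y ∂ρ)) := by
    apply tendsto_integral_filter_of_dominated_convergence
      (fun y : ℝ => s * 2 ^ s * (1 + |y| ^ s)) _ _ int_bound
    · -- a.e. pointwise convergence
      refine ae_of_all _ fun y => ?_
      rcases eq_or_ne y 0 with rfl | hy
      · have hev : (fun x : ℝ => (max (x + 0) 0 ^ s - x ^ s) / x ^ (s - 1)) =ᶠ[atTop]
            fun _ => (0:ℝ) := by
          filter_upwards [eventually_ge_atTop (0:ℝ)] with x hx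
          simp [max_eq_left hx]
        rw [show s * (0:ℝ) = 0 by ring]
        exact Tendsto.congr' hev.symm tendsto_const_nhds
      · -- derivative of (1+t)^s at 0
        have hD : HasDerivAt (fun t : ℝ => (1 + t) ^ s) s 0 := by
          have h1 : HasDerivAt (fun u : ℝ => u ^ s) (s * (1:ℝ) ^ (s - 1)) 1 :=
            Real.hasDerivAt_rpow_const (Or.inl one_ne_zero)
          have h2 : HasDerivAt (fun t : ℝ => 1 + t) 1 0 := by
            simpa using (hasDerivAt_id (0:ℝ)).const_add 1
          have h1' : HasDerivAt (fun u : ℝ => u ^ s) (s * (1:ℝ) ^ (s - 1))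
              ((fun t : ℝ => 1 + t) 0) := by simpa using h1
          have := h1'.comp 0 h2
          simp only [Real.one_rpow, mul_one] at this
          exact this
        have hslope : Tendsto (fun t : ℝ => ((1 + t) ^ s - 1) / t) (𝓝[≠] 0) (𝓝 s) := by
          have := hasDerivAt_iff_tendsto_slope.1 hD
          refine this.congr fun t => ?_
          simp [slope_def_field]
        have hyx : Tendsto (fun x : ℝ => y / x) atTop (𝓝[≠] (0:ℝ)) := by
          rw [tendsto_nhdsWithin_iff]
          constructor
          · exact Tendsto.div_atTop tendsto_const_nhds tendsto_id
          · filter_upwards [eventually_gt_atTop (0:ℝ)] with x hx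
            exact div_ne_zero hy hx.ne'
        have comp : Tendsto (fun x : ℝ => y * (((1 + y / x) ^ s - 1) / (y / x))) atTop
            (𝓝 (y * s)) := (hslope.comp hyx).const_mul y
        rw [show s * y = y * s by ring]
        refine Tendsto.congr' ?_ comp
        filter_upwards [eventually_gt_atTop (|y| + 0), eventually_gt_atTop (0:ℝ)] with x hxy hx0
        have hx0' : (0:ℝ) < x := hx0
        have hxy' : 0 < x + y := by
          have := neg_abs_le y; simp at hxy; linarith
        have hmax : max (x + y) 0 = x + y := max_eq_left hxy'.le
        have hsum : x * (1 + y / x) = x + y := by field_simp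
        have h1yx : (0:ℝ) ≤ 1 + y / x := by
          have h := div_nonneg hxy'.le hx0'.le
          rw [add_div, div_self hx0'.ne'] at h
          exact h
        have hA : (x + y) ^ s = x ^ (s-1) * x * (1 + y / x) ^ s := by
          rw [← hsum, Real.mul_rpow hx0'.le h1yx, ← Real.rpow_add_one hx0'.ne' (s-1)]
          ring_nf
        have hxs : x ^ s = x ^ (s - 1) * x := by
          rw [← Real.rpow_add_one hx0'.ne' (s-1)]; ring_nf
        have hxs1 : x ^ (s - 1) ≠ 0 := (Real.rpow_pos_of_pos hx0' _).ne'
        rw [hmax, hA, hxs]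
        field_simp
    · -- measurability
      refine Eventually.of_forall fun x => Continuous.aestronglyMeasurable ?_
      exact ((((continuous_const.add continuous_id).max continuous_const).rpow_const
        fun y => Or.inr hs0).sub continuous_const).div_const _
    · -- the bound
      filter_upwards [eventually_ge_atTop (1:ℝ)] with x hx
      refine ae_of_all _ fun y => ?_
      have hx0 : (0:ℝ) < x := by linarith
      have hxs1 : (0:ℝ) < x ^ (s - 1) := Real.rpow_pos_of_pos hx0 _
      have hxx : x ^ s / x ^ (s-1) = x := by
        rw [← Real.rpow_sub hx0]; norm_num
      have hbd : |y| ≤ 1 + |y| ^ s := abs_le_one_add_rpow s hs y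
      rcases le_total (x + y) 0 with hc | hc
      · rw [max_eq_right hc, Real.zero_rpow (by linarith : s ≠ 0)]
        have : (0 - x ^ s) / x ^ (s - 1) = -x := by
          rw [zero_sub, neg_div, hxx]
        rw [this, Real.norm_eq_abs, abs_neg, abs_of_pos hx0]
        have hxy : x ≤ |y| := by
          have : y ≤ -x := by linarith
          have := abs_le_abs_of_nonpos (by linarith) this
          simpa [abs_of_pos hx0] using this
        have h1p : (0:ℝ) ≤ 1 + |y| ^ s := by
          have := Real.rpow_nonneg (abs_nonneg y) s; linarith
        have hss : (1:ℝ) ≤ s * 2 ^ s := by nlinarith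
        nlinarith [mul_le_mul_of_nonneg_right hss h1p]
      · rw [max_eq_left hc]
        -- mean value theorem on [0, x + |y|]
        have hC : ‖(x + y) ^ s - x ^ s‖ ≤ s * (x + |y|) ^ (s - 1) * |y| := by
          have hconv : Convex ℝ (Icc (0:ℝ) (x + |y|)) := convex_Icc _ _
          have hmem1 : x ∈ Icc (0:ℝ) (x + |y|) := ⟨hx0.le, by linarith [abs_nonneg y]⟩
          have hmem2 : x + y ∈ Icc (0:ℝ) (x + |y|) := ⟨hc, by linarith [le_abs_self y]⟩
          have hmvt := hconv.norm_image_sub_le_of_norm_hasDerivWithin_le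
            (f := fun u : ℝ => u ^ s) (f' := fun u : ℝ => s * u ^ (s - 1))
            (C := s * (x + |y|) ^ (s - 1))
            (fun u _ => (Real.hasDerivAt_rpow_const (Or.inr hs)).hasDerivWithinAt)
            (fun u hu => ?_) hmem1 hmem2
          · calc ‖(x + y) ^ s - x ^ s‖ ≤ s * (x + |y|) ^ (s - 1) * ‖(x + y) - x‖ := hmvt
              _ = s * (x + |y|) ^ (s - 1) * |y| := by rw [Real.norm_eq_abs]; ring_nf
          · rw [Real.norm_eq_abs, abs_mul, abs_of_nonneg hs0,
              abs_of_nonneg (Real.rpow_nonneg hu.1 _)]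
            exact mul_le_mul_of_nonneg_left
              (Real.rpow_le_rpow hu.1 hu.2 (by linarith)) hs0
        have step1 : (x + |y|) ^ (s - 1) ≤ x ^ (s - 1) * (1 + |y|) ^ (s - 1) := by
          rw [← Real.mul_rpow hx0.le (by positivity)]
          refine Real.rpow_le_rpow (by positivity) ?_ (by linarith)
          nlinarith [abs_nonneg y]
        have step2 : (1 + |y|) ^ (s - 1) * |y| ≤ (1 + |y|) ^ s := by
          have h1y : (0:ℝ) < 1 + |y| := by positivity
          calc (1 + |y|) ^ (s - 1) * |y| ≤ (1 + |y|) ^ (s - 1) * (1 + |y|) := by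
                have := Real.rpow_nonneg h1y.le (s - 1)
                nlinarith [abs_nonneg y]
            _ = (1 + |y|) ^ s := by rw [← Real.rpow_add_one h1y.ne' (s-1)]; norm_num
        have step3 : (1 + |y|) ^ s ≤ 2 ^ s * (1 + |y| ^ s) := by
          calc (1 + |y|) ^ s ≤ (2 * max 1 |y|) ^ s := by
                refine Real.rpow_le_rpow (by positivity) ?_ hs0
                rcases le_total |y| 1 with h | h
                · rw [max_eq_left h]; linarith
                · rw [max_eq_right h]; linarith
            _ = 2 ^ s * max 1 |y| ^ s := Real.mul_rpow (by norm_num) (by positivity)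
            _ ≤ 2 ^ s * (1 + |y| ^ s) :=
                mul_le_mul_of_nonneg_left (max_rpow_le s hs0 y)
                  (Real.rpow_nonneg (by norm_num) s)
        rw [Real.norm_eq_abs, abs_div, abs_of_pos hxs1, div_le_iff₀ hxs1]
        calc |(x + y) ^ s - x ^ s| ≤ s * (x + |y|) ^ (s - 1) * |y| := hC
          _ ≤ s * (x ^ (s - 1) * (1 + |y|) ^ (s - 1)) * |y| :=
              mul_le_mul_of_nonneg_right (mul_le_mul_of_nonneg_left step1 hs0) (abs_nonneg y)
          _ = s * ((1 + |y|) ^ (s - 1) * |y|) * x ^ (s - 1) := by ring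
          _ ≤ s * (1 + |y|) ^ s * x ^ (s - 1) :=
              mul_le_mul_of_nonneg_right (mul_le_mul_of_nonneg_left step2 hs0) hxs1.le
          _ ≤ s * (2 ^ s * (1 + |y| ^ s)) * x ^ (s - 1) :=
              mul_le_mul_of_nonneg_right (mul_le_mul_of_nonneg_left step3 hs0) hxs1.le
          _ = s * 2 ^ s * (1 + |y| ^ s) * x ^ (s - 1) := by ring
  rwa [integral_const_mul] at key

end
end
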